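/- Let T = U|T| and S = V|S| be the polar decompositions of bounded operators T, S on a complex Hilbert space H, and let |T|·|S^*| = W | |T|·|S^*| | be the polar decomposition of |T|·|S^*|. Then TS = (U W V)|TS| is the polar decomposition of TS; that is, U W V is a partial isometry and (U W V)^*(U W V) equals the orthogonal projection onto the closure of the range of (TS)^*. -/

import Mathlib

open ContinuousLinearMap
open scoped InnerProductSpace

set_option synthInstance.maxHeartbeats 1000000
set_option maxHeartbeats 1000000

variable {H : Type*} [NormedAddCommGroup H] [InnerProductSpace ℂ H] [CompleteSpace H]

/-- The absolute value `|T| = (T^*T)^(1/2)` of a bounded operator on a complex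
Hilbert space, defined via the continuous functional calculus. -/
noncomputable def absOp (T : H →L[ℂ] H) : H →L[ℂ] H :=
  cfc Real.sqrt (adjoint T * T)

/-- The orthogonal projection of `H` onto the closure of the range of `T`,
regarded as an operator on `H`. -/
noncomputable def rangeProjOp (T : H →L[ℂ] H) : H →L[ℂ] H :=
  (LinearMap.range (T : H →ₗ[ℂ] H)).topologicalClosure.subtypeL ∘L
    Submodule.orthogonalProjectionOnto (LinearMap.range (T : H →ₗ[ℂ] H)).topologicalClosure

/-- `U` is a partial isometry: `U^*U` is an orthogonal projection
(a self-adjoint idempotent). -/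
def IsPartialIsometryOp (U : H →L[ℂ] H) : Prop :=
  IsSelfAdjoint (adjoint U * U) ∧ (adjoint U * U) * (adjoint U * U) = adjoint U * U

/-- `T = U|T|` is the polar decomposition of `T`: `U` is a partial isometry and
`U^*U` is the orthogonal projection onto the closure of the range of `T^*`. -/
def IsPolarDecompositionOp (T U : H →L[ℂ] H) : Prop :=
  T = U * absOp T ∧ IsPartialIsometryOp U ∧ adjoint U * U = rangeProjOp (adjoint T)

lemma adjMulSelf_nonneg (X : H →L[ℂ] H) : 0 ≤ adjoint X * X := by
  simpa only [star_eq_adjoint] using star_mul_self_nonneg X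

lemma absOp_eq_sqrt (X : H →L[ℂ] H) : absOp X = CFC.sqrt (adjoint X * X) := by
  rw [CFC.sqrt_eq_real_sqrt _ (adjMulSelf_nonneg X),
    cfcₙ_eq_cfc
      (by exact Real.continuous_sqrt.continuousOn) (by simp)]
  rfl

lemma absOp_nonneg (X : H →L[ℂ] H) : 0 ≤ absOp X := by
  rw [absOp_eq_sqrt]; exact CFC.sqrt_nonneg _

lemma absOp_isSelfAdjoint (X : H →L[ℂ] H) : IsSelfAdjoint (absOp X) :=
  IsSelfAdjoint.of_nonneg (absOp_nonneg X)

lemma adjoint_absOp (X : H →L[ℂ] H) : adjoint (absOp X) = absOp X := by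
  rw [← star_eq_adjoint]; exact absOp_isSelfAdjoint X

lemma absOp_mul_self (X : H →L[ℂ] H) : absOp X * absOp X = adjoint X * X := by
  rw [absOp_eq_sqrt]; exact CFC.sqrt_mul_sqrt_self _ (adjMulSelf_nonneg X)

lemma absOp_unique {X B : H →L[ℂ] H} (hB : 0 ≤ B) (h : B * B = adjoint X * X) :
    absOp X = B := by
  rw [absOp_eq_sqrt]; exact CFC.sqrt_unique h hB

lemma adjointOp_mul (A B : H →L[ℂ] H) : adjoint (A * B) = adjoint B * adjoint A := by
  rw [← star_eq_adjoint, ← star_eq_adjoint, ← star_eq_adjoint, star_mul]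

lemma norm_absOp_apply (X : H →L[ℂ] H) (x : H) : ‖absOp X x‖ = ‖X x‖ := by
  have h : ⟪absOp X x, absOp X x⟫_ℂ = ⟪X x, X x⟫_ℂ := by
    rw [← adjoint_inner_right (absOp X), adjoint_absOp, ← mul_apply_eq_comp, absOp_mul_self,
      mul_apply_eq_comp, adjoint_inner_right]
  have h3 : ‖absOp X x‖ ^ 2 = ‖X x‖ ^ 2 := by
    rw [← inner_self_eq_norm_sq (𝕜 := ℂ), ← inner_self_eq_norm_sq (𝕜 := ℂ), h]
  nlinarith [norm_nonneg (absOp X x), norm_nonneg (X x)]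

lemma absOp_apply_eq_zero_iff (X : H →L[ℂ] H) (x : H) : absOp X x = 0 ↔ X x = 0 := by
  rw [← norm_eq_zero, ← norm_eq_zero (a := X x), norm_absOp_apply]

lemma orth_range (Y : H →L[ℂ] H) :
    (LinearMap.range (Y : H →ₗ[ℂ] H))ᗮ = LinearMap.ker ((adjoint Y) : H →ₗ[ℂ] H) := by
  ext x
  simp only [Submodule.mem_orthogonal, LinearMap.mem_ker]
  constructor
  · intro h
    have h2 : ⟪adjoint Y x, adjoint Y x⟫_ℂ = 0 := by
      rw [adjoint_inner_right]
      exact h _ (LinearMap.mem_range_self _ _)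
    exact inner_self_eq_zero.mp h2
  · rintro h u ⟨y, rfl⟩
    rw [ContinuousLinearMap.coe_coe] at h ⊢
    rw [← adjoint_inner_right, h, inner_zero_right]

lemma closure_range_absOp (X : H →L[ℂ] H) :
    (LinearMap.range ((absOp X) : H →ₗ[ℂ] H)).topologicalClosure
      = (LinearMap.range ((adjoint X) : H →ₗ[ℂ] H)).topologicalClosure := by
  rw [← Submodule.orthogonal_orthogonal_eq_closure,
    ← Submodule.orthogonal_orthogonal_eq_closure, orth_range, orth_range,
    adjoint_adjoint, adjoint_absOp]
  congr 1
  ext x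
  simp only [LinearMap.mem_ker]
  exact absOp_apply_eq_zero_iff X x

lemma map_closure {W : H →L[ℂ] H} {s t : Submodule ℂ H}
    (h : ∀ y ∈ s, W y ∈ t.topologicalClosure) :
    ∀ z ∈ s.topologicalClosure, W z ∈ t.topologicalClosure := by
  intro z hz
  have hcl : IsClosed (W ⁻¹' (t.topologicalClosure : Set H)) :=
    (t.isClosed_topologicalClosure).preimage W.continuous
  have hsub : (s : Set H) ⊆ W ⁻¹' (t.topologicalClosure : Set H) := h
  have hz' : z ∈ closure (s : Set H) := by
    rwa [← Submodule.topologicalClosure_coe]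
  exact closure_minimal hsub hcl hz'

lemma fix_closure {Q : H →L[ℂ] H} {s : Submodule ℂ H} (h : ∀ y ∈ s, Q y = y) :
    ∀ z ∈ s.topologicalClosure, Q z = z := by
  intro z hz
  have hcl : IsClosed {w : H | Q w = w} := isClosed_eq Q.continuous continuous_id
  have hz' : z ∈ closure (s : Set H) := by rwa [← Submodule.topologicalClosure_coe]
  exact closure_minimal (fun y hy => h y hy) hcl hz'


lemma rangeProjOp_apply_mem (B : H →L[ℂ] H) (x : H) :
    rangeProjOp B x ∈ (LinearMap.range (B : H →ₗ[ℂ] H)).topologicalClosure := by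
  simp only [rangeProjOp, coe_comp', Function.comp_apply, Submodule.coe_subtypeL',
    Submodule.coe_subtype]
  exact SetLike.coe_mem _

lemma rangeProjOp_apply_of_mem {B : H →L[ℂ] H} {x : H}
    (hx : x ∈ (LinearMap.range (B : H →ₗ[ℂ] H)).topologicalClosure) : rangeProjOp B x = x := by
  simp only [rangeProjOp, coe_comp', Function.comp_apply, Submodule.coe_subtypeL',
    Submodule.coe_subtype]
  exact Submodule.starProjection_eq_self_iff.mpr hx

lemma rangeProjOp_congr {B C : H →L[ℂ] H}
    (h : (LinearMap.range (B : H →ₗ[ℂ] H)).topologicalClosure = (LinearMap.range (C : H →ₗ[ℂ] H)).topologicalClosure) :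
    rangeProjOp B = rangeProjOp C := by
  ext x
  have hmem : rangeProjOp B x ∈ (LinearMap.range (C : H →ₗ[ℂ] H)).topologicalClosure :=
    h ▸ rangeProjOp_apply_mem B x
  have horth : x - rangeProjOp B x ∈ ((LinearMap.range (C : H →ₗ[ℂ] H)).topologicalClosure)ᗮ := by
    rw [← h]
    simpa [rangeProjOp] using
      Submodule.sub_starProjection_mem_orthogonal (K := (LinearMap.range (B : H →ₗ[ℂ] H)).topologicalClosure) x
  have := Submodule.eq_starProjection_of_mem_orthogonal hmem horth
  simp only [rangeProjOp, coe_comp', Function.comp_apply, Submodule.coe_subtypeL',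
    Submodule.coe_subtype] at this ⊢
  exact this.symm

lemma rangeProj_adj_mul_absOp (X : H →L[ℂ] H) :
    rangeProjOp (adjoint X) * absOp X = absOp X := by
  ext x
  have hm : absOp X x ∈ (LinearMap.range ((adjoint X) : H →ₗ[ℂ] H)).topologicalClosure := by
    rw [← closure_range_absOp]
    exact Submodule.le_topologicalClosure _ (LinearMap.mem_range_self _ x)
  simpa [mul_apply_eq_comp] using rangeProjOp_apply_of_mem hm

lemma eq_rangeProjOp {B R : H →L[ℂ] H} (hR : IsSelfAdjoint R)
    (hRB : R * B = B)
    (hmem : ∀ x, R x ∈ (LinearMap.range (B : H →ₗ[ℂ] H)).topologicalClosure) :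
    R = rangeProjOp B := by
  set M := (LinearMap.range (B : H →ₗ[ℂ] H)).topologicalClosure with hM
  ext x
  have h1 : R x ∈ M := hmem x
  have h2 : x - R x ∈ Mᗮ := by
    rw [Submodule.mem_orthogonal]
    intro u hu
    have hcl : IsClosed {w : H | ⟪w, x - R x⟫_ℂ = 0} :=
      isClosed_eq (Continuous.inner continuous_id continuous_const) continuous_const
    have hsub : (LinearMap.range (B : H →ₗ[ℂ] H) : Set H) ⊆ {w : H | ⟪w, x - R x⟫_ℂ = 0} := by
      rintro w ⟨y, rfl⟩
      have hadj : adjoint R = R := by rw [← star_eq_adjoint]; exact hR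
      have hRBy : R (B y) = B y := by rw [← mul_apply_eq_comp, hRB]
      have : ⟪B y, R x⟫_ℂ = ⟪B y, x⟫_ℂ := by
        rw [← hadj, adjoint_inner_right, hRBy]
      simp [inner_sub_right, this]
    have hu' : u ∈ closure (LinearMap.range (B : H →ₗ[ℂ] H) : Set H) := by
      rwa [← Submodule.topologicalClosure_coe]
    exact closure_minimal hsub hcl hu'
  have h3 : M.starProjection x = R x :=
    Submodule.eq_starProjection_of_mem_orthogonal h1 h2
  simp only [rangeProjOp, coe_comp', Function.comp_apply, Submodule.coe_subtypeL',
    Submodule.coe_subtype, ← hM]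
  exact h3.symm

lemma partialIso_mul_proj {V : H →L[ℂ] H}
    (h1 : IsSelfAdjoint (adjoint V * V))
    (h2 : (adjoint V * V) * (adjoint V * V) = adjoint V * V) :
    V * (adjoint V * V) = V := by
  rw [← star_eq_adjoint] at h1 h2 ⊢
  set P := star V * V with hP
  have hPstar : star P = P := h1
  have key : star (V * P - V) * (V * P - V) = 0 := by
    have expand : star (V * P - V) * (V * P - V)
        = P * (star V * V) * P - P * (star V * V) - (star V * V) * P + star V * V := by
      simp only [star_sub, star_mul, hPstar]
      noncomm_ring
    rw [expand, ← hP, h2, h2]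
    abel
  have h0 : V * P - V = 0 := CStarRing.star_mul_self_eq_zero_iff (V * P - V) |>.mp key
  have := sub_eq_zero.mp h0
  exact this

/-- If `T = U|T|`, `S = V|S|` and `|T||S^*| = W | |T||S^*| |` are polar
decompositions, then `TS = (UWV)|TS|` is the polar decomposition of `TS`. -/
theorem polarDecomposition_mul (T S U V W : H →L[ℂ] H)
    (hT : IsPolarDecompositionOp T U) (hS : IsPolarDecompositionOp S V)
    (hW : IsPolarDecompositionOp (absOp T * absOp (adjoint S)) W) :
    IsPolarDecompositionOp (T * S) (U * W * V) := by
  obtain ⟨hT1, ⟨hT2, hT3⟩, hT4⟩ := hT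
  obtain ⟨hS1, ⟨hS2, hS3⟩, hS4⟩ := hS
  obtain ⟨hW1, ⟨hW2, hW3⟩, hW4⟩ := hW
  set a := absOp T with ha_def
  set b := absOp S with hb_def
  set c := absOp (adjoint S) with hc_def
  set A := absOp (a * c) with hA_def
  -- basic self-adjointness facts
  have ha_sa : star a = a := by rw [ha_def]; exact (absOp_isSelfAdjoint T).star_eq
  have hb_sa : star b = b := by rw [hb_def]; exact (absOp_isSelfAdjoint S).star_eq
  have hcsa : star c = c := by rw [hc_def]; exact (absOp_isSelfAdjoint (adjoint S)).star_eq
  have hA_sa : star A = A := by rw [hA_def]; exact (absOp_isSelfAdjoint (a * c)).star_eq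
  have hadj_a : adjoint a = a := by rw [← star_eq_adjoint]; exact ha_sa
  have hadj_b : adjoint b = b := by rw [← star_eq_adjoint]; exact hb_sa
  have hadj_c : adjoint c = c := by rw [← star_eq_adjoint]; exact hcsa
  have hadj_A : adjoint A = A := by rw [← star_eq_adjoint]; exact hA_sa
  -- projections fixing ranges
  have hPb : (adjoint V * V) * b = b := by
    rw [hS4, hb_def]; exact rangeProj_adj_mul_absOp S
  have hPb_pt : ∀ y, adjoint V (V (b y)) = b y := fun y => by
    simpa [mul_apply_eq_comp] using DFunLike.congr_fun hPb y
  have hbP : b * (adjoint V * V) = b := by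
    have := congrArg star hPb
    rwa [star_mul, hS2.star_eq, hb_sa] at this
  have hbP_pt : ∀ y, b (adjoint V (V y)) = b y := fun y => by
    simpa [mul_apply_eq_comp] using DFunLike.congr_fun hbP y
  -- |S^*| = V b V^*
  have hc_eq : c = V * b * adjoint V := by
    rw [hc_def]
    apply absOp_unique
    · have hbpos : (b : H →L[ℂ] H).IsPositive :=
        (nonneg_iff_isPositive b).mp (hb_def ▸ absOp_nonneg S)
      exact (nonneg_iff_isPositive _).mpr (hbpos.conj_adjoint V)
    · have hSS : adjoint (adjoint S) * adjoint S = (V * b) * (b * adjoint V) := by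
        rw [adjoint_adjoint]
        have hSadj : adjoint S = b * adjoint V := by
          rw [hS1, adjointOp_mul, hadj_b]
        rw [hSadj, hS1]
      rw [hSS]
      ext x
      simp only [mul_apply_eq_comp]
      rw [hPb_pt]
  have hcV : c * V = S := by
    rw [hc_eq]
    ext x
    simp only [mul_apply_eq_comp]
    rw [hbP_pt, ← mul_apply_eq_comp V b, ← hS1]
  have hSadj2 : adjoint S = adjoint V * c := by
    rw [← hcV, adjointOp_mul, hadj_c]
  -- Q = V V^* fixes closure of range S
  have hQfix : ∀ z ∈ (LinearMap.range (S : H →ₗ[ℂ] H)).topologicalClosure, V (adjoint V z) = z := by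
    have base : ∀ y ∈ LinearMap.range (S : H →ₗ[ℂ] H), (V * adjoint V) y = y := by
      rintro y ⟨z, rfl⟩
      have : S z = V (b z) := by rw [hS1]; simp [mul_apply_eq_comp]
      simp only [ContinuousLinearMap.coe_coe] at this ⊢
      rw [mul_apply_eq_comp, this, hPb_pt]
    intro z hz
    simpa [mul_apply_eq_comp] using fix_closure base z hz
  -- closure range inclusions
  have hclA_adj : (LinearMap.range (A : H →ₗ[ℂ] H)).topologicalClosure
      = (LinearMap.range ((adjoint (a * c)) : H →ₗ[ℂ] H)).topologicalClosure := by
    rw [hA_def]; exact closure_range_absOp (a * c)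
  have hclc_S : (LinearMap.range (c : H →ₗ[ℂ] H)).topologicalClosure
      = (LinearMap.range (S : H →ₗ[ℂ] H)).topologicalClosure := by
    rw [hc_def]
    have := closure_range_absOp (adjoint S)
    rwa [adjoint_adjoint] at this
  have hclA_le : (LinearMap.range (A : H →ₗ[ℂ] H)).topologicalClosure
      ≤ (LinearMap.range (S : H →ₗ[ℂ] H)).topologicalClosure := by
    rw [hclA_adj, ← hclc_S]
    have hr : LinearMap.range ((adjoint (a * c)) : H →ₗ[ℂ] H) ≤ LinearMap.range (c : H →ₗ[ℂ] H) := by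
      rw [adjointOp_mul, hadj_a, hadj_c]
      rintro y ⟨z, rfl⟩
      exact ⟨a z, rfl⟩
    exact Submodule.topologicalClosure_mono hr
  have hQA_pt : ∀ y, V (adjoint V (A y)) = A y := fun y =>
    hQfix _ (hclA_le (Submodule.le_topologicalClosure _ (LinearMap.mem_range_self _ y)))
  have hQA_op : (V * adjoint V) * A = A := by
    ext x; simp only [mul_apply_eq_comp]; exact hQA_pt x
  have hAQ_op : A * (V * adjoint V) = A := by
    have := congrArg star hQA_op
    rwa [star_mul, star_mul, hA_sa, star_eq_adjoint V, star_eq_adjoint (adjoint V),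
      adjoint_adjoint] at this
  have hAQ_pt : ∀ z, A (V (adjoint V z)) = A z := fun z => by
    simpa [mul_apply_eq_comp] using DFunLike.congr_fun hAQ_op z
  -- |TS| = V^* A V
  have habsTS : absOp (T * S) = adjoint V * A * V := by
    apply absOp_unique
    · have hApos : (A : H →L[ℂ] H).IsPositive :=
        (nonneg_iff_isPositive A).mp (hA_def ▸ absOp_nonneg (a * c))
      exact (nonneg_iff_isPositive _).mpr (hApos.adjoint_conj V)
    · have hAA : A * A = c * (a * (a * c)) := by
        rw [hA_def]
        have := absOp_mul_self (a * c)
        rw [adjointOp_mul, hadj_a, hadj_c] at this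
        rw [this]; noncomm_ring
      have hTaT : ∀ z, adjoint T (T z) = a (a z) := fun z => by
        have h := DFunLike.congr_fun (absOp_mul_self T) z
        rw [← ha_def] at h
        simpa [mul_apply_eq_comp] using h.symm
      rw [adjointOp_mul]
      ext x
      simp only [mul_apply_eq_comp]
      rw [hQA_pt, ← mul_apply_eq_comp A A, hAA]
      simp only [mul_apply_eq_comp]
      rw [hSadj2, ← hcV]
      simp only [mul_apply_eq_comp]
      rw [hTaT]
  -- Goal 1
  have goal1 : T * S = (U * W * V) * absOp (T * S) := by
    rw [habsTS]
    ext x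
    simp only [mul_apply_eq_comp]
    rw [hQA_pt, ← mul_apply_eq_comp W A, ← hW1, hT1, ← hcV]
    simp only [mul_apply_eq_comp]
  -- U^*U fixes range of W
  have hclA_a : ∀ x, W x ∈ (LinearMap.range (a : H →ₗ[ℂ] H)).topologicalClosure := by
    have hW_fix : ∀ x, W x = W (rangeProjOp (adjoint (a * c)) x) := by
      intro x
      have hWp := partialIso_mul_proj hW2 hW3
      have := DFunLike.congr_fun hWp x
      rw [hW4] at this
      simpa [mul_apply_eq_comp] using this.symm
    have hmap : ∀ z ∈ (LinearMap.range (A : H →ₗ[ℂ] H)).topologicalClosure,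
        W z ∈ (LinearMap.range (a : H →ₗ[ℂ] H)).topologicalClosure := by
      apply map_closure
      rintro y ⟨z, rfl⟩
      have : W (A z) = a (c z) := by
        rw [← mul_apply_eq_comp W A, ← hW1]; simp [mul_apply_eq_comp]
      rw [ContinuousLinearMap.coe_coe, this]
      exact Submodule.le_topologicalClosure _ (LinearMap.mem_range_self _ _)
    intro x
    rw [hW_fix x]
    apply hmap
    rw [hclA_adj]
    exact rangeProjOp_apply_mem _ x
  have hUUW_pt : ∀ x, adjoint U (U (W x)) = W x := by
    intro x
    have hmem : W x ∈ (LinearMap.range ((adjoint T) : H →ₗ[ℂ] H)).topologicalClosure := by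
      have := hclA_a x
      rwa [ha_def, closure_range_absOp T] at this
    have := rangeProjOp_apply_of_mem hmem
    rw [← hT4] at this
    simpa [mul_apply_eq_comp] using this
  -- P_W facts
  have hPWA : (adjoint W * W) * A = A := by
    rw [hW4, hA_def]; exact rangeProj_adj_mul_absOp (a * c)
  have hPWA_pt : ∀ y, adjoint W (W (A y)) = A y := fun y => by
    simpa [mul_apply_eq_comp] using DFunLike.congr_fun hPWA y
  have hPW_idem_pt : ∀ x, adjoint W (W (adjoint W (W x))) = adjoint W (W x) := fun x => by
    simpa [mul_apply_eq_comp] using DFunLike.congr_fun hW3 x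
  have hQPW_pt : ∀ x, V (adjoint V (adjoint W (W x))) = adjoint W (W x) := by
    intro x
    apply hQfix
    apply hclA_le
    have : adjoint W (W x) = rangeProjOp (adjoint (a * c)) x := by
      have := DFunLike.congr_fun hW4 x
      simpa [mul_apply_eq_comp] using this
    rw [this, hclA_adj]
    exact rangeProjOp_apply_mem _ x
  -- the product of the three partial isometries
  have hR : adjoint (U * W * V) * (U * W * V) = adjoint V * (adjoint W * W) * V := by
    ext x
    simp only [adjointOp_mul, mul_apply_eq_comp]
    rw [hUUW_pt]
  have goal2 : IsPartialIsometryOp (U * W * V) := by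
    constructor
    · rw [← star_eq_adjoint]
      exact IsSelfAdjoint.star_mul_self (U * W * V)
    · rw [hR]
      ext x
      simp only [mul_apply_eq_comp]
      rw [hQPW_pt, hPW_idem_pt]
  have goal3 : adjoint (U * W * V) * (U * W * V) = rangeProjOp (adjoint (T * S)) := by
    have hcongr : rangeProjOp (absOp (T * S)) = rangeProjOp (adjoint (T * S)) :=
      rangeProjOp_congr (closure_range_absOp (T * S))
    rw [← hcongr]
    apply eq_rangeProjOp
    · rw [← star_eq_adjoint]
      exact IsSelfAdjoint.star_mul_self (U * W * V)
    · rw [habsTS, hR]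
      ext x
      simp only [mul_apply_eq_comp]
      rw [hQA_pt, hPWA_pt]
    · intro x
      rw [habsTS, hR]
      have hmem1 : adjoint W (W (V x)) ∈ (LinearMap.range (A : H →ₗ[ℂ] H)).topologicalClosure := by
        have heq : adjoint W (W (V x)) = rangeProjOp (adjoint (a * c)) (V x) := by
          simpa [mul_apply_eq_comp] using DFunLike.congr_fun hW4 (V x)
        rw [heq, hclA_adj]
        exact rangeProjOp_apply_mem _ _
      have hmap : ∀ z ∈ (LinearMap.range (A : H →ₗ[ℂ] H)).topologicalClosure,
          adjoint V z ∈ (LinearMap.range ((adjoint V * A * V : H →L[ℂ] H) : H →ₗ[ℂ] H)).topologicalClosure := by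
        apply map_closure
        rintro y ⟨z, rfl⟩
        have : adjoint V (A z) = (adjoint V * A * V) (adjoint V z) := by
          simp only [mul_apply_eq_comp]
          rw [hAQ_pt z]
        rw [ContinuousLinearMap.coe_coe, this]
        exact Submodule.le_topologicalClosure _ (LinearMap.mem_range_self _ _)
      have := hmap _ hmem1
      simpa [mul_apply_eq_comp] using this
  exact ⟨goal1, goal2, goal3⟩
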